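/- Let (Ω,F,P) be a probability space, (F_t)_{t≥0} a filtration of F, and T a stopping time with respect to (F_t). If there exists an instance ((X_t)_{t≥0}, (L^t_1,…,L^t_n)_{t≥0}) of an n-dimensional generalized lexicographic ranking supermartingale (GLexRSM) for T over (Ω,F,P), then P[T < ∞] = 1. -/

import Mathlib

open MeasureTheory Set
open scoped ENNReal

/-- An instance of an `n`-dimensional generalized lexicographic ranking supermartingale
(GLexRSM) for a stopping time `T` (with values in `ℕ∞`): the process `X` together with the
`ℱ t`-measurable sets `L t j` partitioning `{T > t}`, satisfying measurability/integrability,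
the lexicographic expected decrease conditions, partial non-negativity, and expected leftward
non-negativity. -/
def IsGLexRSMInstance {Ω : Type*} {m : MeasurableSpace Ω} (μ : Measure Ω)
    (ℱ : Filtration ℕ m) (T : Ω → ℕ∞) {n : ℕ}
    (X : ℕ → Fin n → Ω → ℝ) (L : ℕ → Fin n → Set Ω) : Prop :=
  -- the sets `L t j` partition `{T > t}`
  (∀ t : ℕ, (⋃ j, L t j) = {ω | (t : ℕ∞) < T ω}) ∧
  (∀ t : ℕ, ∀ j j' : Fin n, j ≠ j' → Disjoint (L t j) (L t j')) ∧
  (∀ t : ℕ, ∀ j : Fin n, MeasurableSet[ℱ t] (L t j)) ∧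
  -- (1) each `X t j` is `ℱ t`-measurable
  (∀ t : ℕ, ∀ j : Fin n, StronglyMeasurable[ℱ t] (X t j)) ∧
  -- (2) the relevant conditional expectations exist: each `X t j` is integrable
  (∀ t : ℕ, ∀ j : Fin n, Integrable (X t j) μ) ∧
  -- (3a) expected non-increase on `⋃_{j' ≥ j} L t j'`
  (∀ t : ℕ, ∀ j : Fin n, ∀ ω ∈ ⋃ j' ≥ j, L t j',
      (μ[X (t + 1) j | ℱ t]) ω ≤ X t j ω) ∧
  -- (3b) expected decrease by 1 on `L t j`
  (∀ t : ℕ, ∀ j : Fin n, ∀ ω ∈ L t j,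
      (μ[X (t + 1) j | ℱ t]) ω ≤ X t j ω - 1) ∧
  -- (3c) non-negativity on `⋃_{j' ≥ j} L t j'`
  (∀ t : ℕ, ∀ j : Fin n, ∀ ω ∈ ⋃ j' ≥ j, L t j', 0 ≤ X t j ω) ∧
  -- (3d) expected leftward non-negativity, where `L (t+1) 0 = {T ≤ t+1}`
  (∀ t : ℕ, ∀ j : Fin n, ∀ ω ∈ ⋃ j' ≥ j, L t j',
      0 ≤ (μ[Set.indicator
              ({ω' | T ω' ≤ ((t + 1 : ℕ) : ℕ∞)} ∪ ⋃ j' < j, L (t + 1) j')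
              (X (t + 1) j) | ℱ t]) ω)

section Aux

variable {Ω : Type*} {m : MeasurableSpace Ω}

/-- The event of staying at lexicographic levels `≥ j` at all times in `[s, t]`. -/
def glexA {n : ℕ} (L : ℕ → Fin n → Set Ω) (j : Fin n) (s t : ℕ) : Set Ω :=
  ⋂ u ∈ Set.Icc s t, ⋃ j' ≥ j, L u j'

variable (μ : Measure Ω) [IsProbabilityMeasure μ] (ℱ : Filtration ℕ m) (T : Ω → ℕ∞)
  {n : ℕ} (X : ℕ → Fin n → Ω → ℝ) (L : ℕ → Fin n → Set Ω)

theorem glex_null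
    (hpart : ∀ t : ℕ, (⋃ j, L t j) = {ω | (t : ℕ∞) < T ω})
    (hdisj : ∀ t : ℕ, ∀ j j' : Fin n, j ≠ j' → Disjoint (L t j) (L t j'))
    (hLmeas : ∀ t : ℕ, ∀ j : Fin n, MeasurableSet[ℱ t] (L t j))
    (hXint : ∀ t : ℕ, ∀ j : Fin n, Integrable (X t j) μ)
    (h3a : ∀ t : ℕ, ∀ j : Fin n, ∀ ω ∈ ⋃ j' ≥ j, L t j',
      (μ[X (t + 1) j | ℱ t]) ω ≤ X t j ω)
    (h3b : ∀ t : ℕ, ∀ j : Fin n, ∀ ω ∈ L t j,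
      (μ[X (t + 1) j | ℱ t]) ω ≤ X t j ω - 1)
    (h3c : ∀ t : ℕ, ∀ j : Fin n, ∀ ω ∈ ⋃ j' ≥ j, L t j', 0 ≤ X t j ω)
    (hT : ∀ t : ℕ, MeasurableSet[ℱ t] {ω | T ω ≤ (t : ℕ∞)})
    (h3d : ∀ t : ℕ, ∀ j : Fin n, ∀ ω ∈ ⋃ j' ≥ j, L t j',
      0 ≤ (μ[Set.indicator
              ({ω' | T ω' ≤ ((t + 1 : ℕ) : ℕ∞)} ∪ ⋃ j' < j, L (t + 1) j')
              (X (t + 1) j) | ℱ t]) ω)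
    (j : Fin n) (s : ℕ) :
    μ (Filter.limsup (fun t => glexA L j s t ∩ L t j) Filter.atTop) = 0 := by
  set U : ℕ → Set Ω := fun u => ⋃ j' ≥ j, L u j' with hU
  set A : ℕ → Set Ω := fun t => glexA L j s t with hA
  -- measurability
  have hUmeas : ∀ u, MeasurableSet[ℱ u] (U u) :=
    fun u => MeasurableSet.biUnion (Set.to_countable _) fun j' _ => hLmeas u j'
  have hAmeas : ∀ t, MeasurableSet[ℱ t] (A t) := by
    intro t
    exact MeasurableSet.biInter (Set.to_countable _)
      fun u hu => (ℱ.mono hu.2) _ (hUmeas u)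
  have hAm : ∀ t, MeasurableSet (A t) := fun t => ℱ.le t _ (hAmeas t)
  have hLm : ∀ t j', MeasurableSet (L t j') := fun t j' => ℱ.le t _ (hLmeas t j')
  have hAsubU : ∀ t, s ≤ t → A t ⊆ U t := by
    intro t ht ω hω
    exact Set.mem_iInter₂.mp hω t ⟨ht, le_refl t⟩
  have hAsucc : ∀ t, s ≤ t → A (t + 1) = A t ∩ U (t + 1) := by
    intro t ht
    ext ω
    simp only [hA, glexA, Set.mem_iInter, Set.mem_inter_iff, Set.mem_Icc]
    constructor
    · intro h
      exact ⟨fun u hu => h u ⟨hu.1, by omega⟩, h (t + 1) ⟨by omega, le_refl _⟩⟩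
    · rintro ⟨h1, h2⟩ u ⟨hu1, hu2⟩
      rcases Nat.lt_or_ge u (t + 1) with h | h
      · exact h1 u ⟨hu1, by omega⟩
      · have : u = t + 1 := by omega
        subst this; exact h2
  -- the complementary set
  set C : ℕ → Set Ω := fun t =>
    {ω' | T ω' ≤ ((t + 1 : ℕ) : ℕ∞)} ∪ ⋃ j' < j, L (t + 1) j' with hC
  have hCm : ∀ t, MeasurableSet (C t) := by
    intro t
    exact ℱ.le (t + 1) _ ((hT (t + 1)).union
      (MeasurableSet.biUnion (Set.to_countable _) fun j' _ => hLmeas (t + 1) j'))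
  have hUC : ∀ t, U (t + 1) ∪ C t = Set.univ := by
    intro t
    ext ω
    simp only [Set.mem_union, Set.mem_univ, iff_true]
    rcases le_or_gt (T ω) ((t + 1 : ℕ) : ℕ∞) with h | h
    · exact Or.inr (Or.inl h)
    · have : ω ∈ ⋃ j', L (t + 1) j' := by rw [hpart (t + 1)]; exact h
      obtain ⟨j', hj'⟩ := Set.mem_iUnion.mp this
      rcases le_or_gt j j' with hle | hlt
      · exact Or.inl (Set.mem_iUnion₂.mpr ⟨j', hle, hj'⟩)
      · exact Or.inr (Or.inr (Set.mem_iUnion₂.mpr ⟨j', hlt, hj'⟩))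
  have hUCdisj : ∀ t, Disjoint (U (t + 1)) (C t) := by
    intro t
    rw [Set.disjoint_left]
    intro ω hωU hωC
    obtain ⟨j₁, hj₁le, hj₁⟩ := Set.mem_iUnion₂.mp hωU
    rcases hωC with h | h
    · have : ω ∈ ⋃ j', L (t + 1) j' := Set.mem_iUnion.mpr ⟨j₁, hj₁⟩
      rw [hpart (t + 1)] at this
      rw [Set.mem_setOf_eq] at this h
      exact (not_le.mpr this) h
    · obtain ⟨j₂, hj₂lt, hj₂⟩ := Set.mem_iUnion₂.mp h
      have hne : j₁ ≠ j₂ := fun hEq => absurd (hEq ▸ hj₁le) (not_le.mpr hj₂lt)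
      exact Set.disjoint_left.mp (hdisj (t + 1) j₁ j₂ hne) hj₁ hj₂
  -- the one-step decrease
  have key : ∀ t, s ≤ t →
      (∫ ω in A (t + 1), X (t + 1) j ω ∂μ) + (μ (A t ∩ L t j)).toReal ≤
        ∫ ω in A t, X t j ω ∂μ := by
    intro t ht
    have hm := ℱ.le t
    haveI : SigmaFinite (μ.trim hm) := by infer_instance
    -- split A t
    have hsplit : A t = A (t + 1) ∪ (A t ∩ C t) := by
      rw [hAsucc t ht]
      rw [← Set.inter_union_distrib_left, hUC t, Set.inter_univ]
    have hdisj2 : Disjoint (A t ∩ U (t + 1)) (A t ∩ C t) :=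
      ((hUCdisj t).mono inf_le_right inf_le_right)
    have hint : Integrable (X (t + 1) j) μ := hXint (t + 1) j
    have hsplitInt : (∫ ω in A t, X (t + 1) j ω ∂μ)
        = (∫ ω in A (t + 1), X (t + 1) j ω ∂μ) + ∫ ω in A t ∩ C t, X (t + 1) j ω ∂μ := by
      rw [hsplit, setIntegral_union ?_ ((hAm t).inter (hCm t)) hint.integrableOn
        hint.integrableOn]
      · rw [← hsplit]
      · rw [hAsucc t ht]; exact hdisj2
    -- the C-part is nonnegative (condition 3d)
    have hCpos : 0 ≤ ∫ ω in A t ∩ C t, X (t + 1) j ω ∂μ := by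
      have h1 : (∫ ω in A t ∩ C t, X (t + 1) j ω ∂μ)
          = ∫ ω in A t, (C t).indicator (X (t + 1) j) ω ∂μ := by
        rw [setIntegral_indicator (hCm t)]
      rw [h1, ← setIntegral_condExp hm ((hXint (t + 1) j).indicator (hCm t)) (hAmeas t)]
      exact setIntegral_nonneg (hAm t)
        fun ω hω => h3d t j ω (hAsubU t ht hω)
    -- the main estimate via 3a/3b
    have hmain : (∫ ω in A t, X (t + 1) j ω ∂μ)
        ≤ (∫ ω in A t, X t j ω ∂μ) - (μ (A t ∩ L t j)).toReal := by
      rw [← setIntegral_condExp hm hint (hAmeas t)]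
      have hle : ∀ ω ∈ A t,
          (μ[X (t + 1) j | ℱ t]) ω ≤ X t j ω - (L t j).indicator (fun _ => (1 : ℝ)) ω := by
        intro ω hω
        by_cases hωL : ω ∈ L t j
        · rw [Set.indicator_of_mem hωL]
          exact h3b t j ω hωL
        · rw [Set.indicator_of_notMem hωL, sub_zero]
          exact h3a t j ω (hAsubU t ht hω)
      have hInd : Integrable ((L t j).indicator (fun _ => (1 : ℝ))) μ :=
        (integrable_const (1 : ℝ)).indicator (hLm t j)
      calc (∫ ω in A t, (μ[X (t + 1) j | ℱ t]) ω ∂μ)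
          ≤ ∫ ω in A t, (X t j ω - (L t j).indicator (fun _ => (1 : ℝ)) ω) ∂μ :=
            setIntegral_mono_on integrable_condExp.integrableOn
              ((hXint t j).sub hInd).integrableOn (hAm t) hle
        _ = (∫ ω in A t, X t j ω ∂μ) - ∫ ω in A t, (L t j).indicator (fun _ => (1 : ℝ)) ω ∂μ :=
            integral_sub (hXint t j).integrableOn hInd.integrableOn
        _ = (∫ ω in A t, X t j ω ∂μ) - (μ (A t ∩ L t j)).toReal := by
            rw [setIntegral_indicator (hLm t j), setIntegral_const, smul_eq_mul, mul_one]; rfl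
    -- combine
    have := hsplitInt
    linarith [hCpos, hmain]
  -- telescoping
  have Inonneg : ∀ u, s ≤ u → 0 ≤ ∫ ω in A u, X u j ω ∂μ := by
    intro u hu
    exact setIntegral_nonneg (hAm u) fun ω hω => h3c u j ω (hAsubU u hu hω)
  have tele : ∀ u, s ≤ u →
      (∑ t ∈ Finset.Ico s u, (μ (A t ∩ L t j)).toReal) + (∫ ω in A u, X u j ω ∂μ)
        ≤ ∫ ω in A s, X s j ω ∂μ := by
    intro u hu
    induction u, hu using Nat.le_induction with
    | base => simp
    | succ u hu ih =>
      rw [Finset.sum_Ico_succ_top hu]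
      have := key u hu
      linarith
  have bound : ∀ u, (∑ t ∈ Finset.Ico s u, (μ (A t ∩ L t j)).toReal)
      ≤ ∫ ω in A s, X s j ω ∂μ := by
    intro u
    rcases le_or_gt s u with h | h
    · have := tele u h
      have := Inonneg u h
      linarith
    · rw [Finset.Ico_eq_empty (by omega)]
      simpa using Inonneg s le_rfl
  -- summability
  have hsum : (∑' t, μ (A t ∩ L t j)) ≠ ∞ := by
    have hle : (∑' t, μ (A t ∩ L t j))
        ≤ (s : ℝ≥0∞) + ENNReal.ofReal (∫ ω in A s, X s j ω ∂μ) := by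
      refine Summable.tsum_le_of_sum_le ENNReal.summable ?_
      intro F
      set u : ℕ := s + (F.sup id) + 1 with hu
      have hFsub : F ⊆ Finset.range u := by
        intro x hx
        simp only [Finset.mem_range]
        have h2 : x ≤ F.sup id := Finset.le_sup (f := id) hx
        omega
      have hsu : s ≤ u := by omega
      calc (∑ t ∈ F, μ (A t ∩ L t j))
          ≤ ∑ t ∈ Finset.range u, μ (A t ∩ L t j) :=
            Finset.sum_le_sum_of_subset hFsub
        _ = (∑ t ∈ Finset.Ico 0 s, μ (A t ∩ L t j))
            + ∑ t ∈ Finset.Ico s u, μ (A t ∩ L t j) := by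
            rw [Finset.range_eq_Ico, ← Finset.sum_Ico_consecutive _ (Nat.zero_le s) hsu]
        _ ≤ (s : ℝ≥0∞) + ENNReal.ofReal (∫ ω in A s, X s j ω ∂μ) := by
            gcongr
            · calc (∑ t ∈ Finset.Ico 0 s, μ (A t ∩ L t j))
                  ≤ ∑ _t ∈ Finset.Ico 0 s, (1 : ℝ≥0∞) :=
                    Finset.sum_le_sum fun t _ => prob_le_one
                _ = (s : ℝ≥0∞) := by simp
            · calc (∑ t ∈ Finset.Ico s u, μ (A t ∩ L t j))
                  = ∑ t ∈ Finset.Ico s u, ENNReal.ofReal ((μ (A t ∩ L t j)).toReal) := by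
                    refine Finset.sum_congr rfl fun t _ => ?_
                    rw [ENNReal.ofReal_toReal (measure_ne_top μ _)]
                _ = ENNReal.ofReal (∑ t ∈ Finset.Ico s u, (μ (A t ∩ L t j)).toReal) := by
                    rw [ENNReal.ofReal_sum_of_nonneg fun t _ => ENNReal.toReal_nonneg]
                _ ≤ ENNReal.ofReal (∫ ω in A s, X s j ω ∂μ) :=
                    ENNReal.ofReal_le_ofReal (bound u)
    intro hTop
    rw [hTop] at hle
    exact absurd hle (by simp [ENNReal.add_eq_top, ENNReal.ofReal_ne_top])
  exact measure_limsup_atTop_eq_zero hsum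

end Aux

/-- **Theorem (soundness of GLexRSMs).** -/
theorem glexrsm_almost_sure_termination
    {Ω : Type*} {m : MeasurableSpace Ω} (μ : Measure Ω) [IsProbabilityMeasure μ]
    (ℱ : Filtration ℕ m) (T : Ω → ℕ∞)
    (hT : ∀ t : ℕ, MeasurableSet[ℱ t] {ω | T ω ≤ (t : ℕ∞)})
    {n : ℕ} (X : ℕ → Fin n → Ω → ℝ) (L : ℕ → Fin n → Set Ω)
    (hinst : IsGLexRSMInstance μ ℱ T X L) :
    μ {ω | T ω < ⊤} = 1 := by
  obtain ⟨hpart, hdisj, hLmeas, hXmeas, hXint, h3a, h3b, h3c, h3d⟩ := hinst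
  have hnull : μ (⋃ (j : Fin n) (s : ℕ),
      Filter.limsup (fun t => glexA L j s t ∩ L t j) Filter.atTop) = 0 :=
    measure_iUnion_null fun j => measure_iUnion_null fun s =>
      glex_null μ ℱ T X L hpart hdisj hLmeas hXint h3a h3b h3c hT h3d j s
  have hsub : {ω | T ω < ⊤}ᶜ ⊆ ⋃ (j : Fin n) (s : ℕ),
      Filter.limsup (fun t => glexA L j s t ∩ L t j) Filter.atTop := by
    intro ω hω
    have hTinf : ∀ t : ℕ, (t : ℕ∞) < T ω := by
      simp only [Set.mem_compl_iff, Set.mem_setOf_eq, not_lt, top_le_iff] at hω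
      intro t
      rw [hω]
      exact lt_top_iff_ne_top.mpr (by simp)
    have hlvl : ∀ t : ℕ, ∃ j, ω ∈ L t j := by
      intro t
      have : ω ∈ ⋃ j, L t j := by rw [hpart t]; exact hTinf t
      exact Set.mem_iUnion.mp this
    choose lvl hlvl using hlvl
    haveI : Nonempty (Fin n) := ⟨lvl 0⟩
    set S : Set (Fin n) := {j | ∀ N : ℕ, ∃ t ≥ N, lvl t = j} with hS
    have hSne : S.Nonempty := by
      by_contra hemp
      rw [Set.not_nonempty_iff_eq_empty] at hemp
      have h : ∀ jj : Fin n, ∃ N : ℕ, ∀ t, N ≤ t → lvl t ≠ jj := by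
        intro jj
        have hnot : ¬ (∀ N : ℕ, ∃ t ≥ N, lvl t = jj) := by
          intro hin
          have : jj ∈ S := hin
          rw [hemp] at this
          exact Set.notMem_empty jj this
        push_neg at hnot
        obtain ⟨N, hN⟩ := hnot
        exact ⟨N, fun t ht => hN t ht⟩
      choose N hN using h
      have := hN (lvl (Finset.univ.sup N)) (Finset.univ.sup N)
        (Finset.le_sup (Finset.mem_univ _)) rfl
      exact this
    obtain ⟨j₀, hj₀S, hj₀min⟩ := Set.exists_min_image S id (Set.toFinite S) hSne
    have habs : ∀ j' : Fin n, ∃ N : ℕ, ∀ t, N ≤ t → j' < j₀ → lvl t ≠ j' := by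
      intro j'
      by_cases h : j' < j₀
      · have hj'S : j' ∉ S := fun hin => absurd (hj₀min j' hin) (not_le.mpr h)
        have hnot : ¬ (∀ N : ℕ, ∃ t ≥ N, lvl t = j') := hj'S
        push_neg at hnot
        obtain ⟨N, hN⟩ := hnot
        exact ⟨N, fun t ht _ => hN t ht⟩
      · exact ⟨0, fun t _ hlt => absurd hlt h⟩
    choose M hM using habs
    set s₀ : ℕ := Finset.univ.sup M with hs₀
    have hge : ∀ t, s₀ ≤ t → j₀ ≤ lvl t := by
      intro t ht
      by_contra hlt
      push_neg at hlt
      exact hM (lvl t) t (le_trans (Finset.le_sup (Finset.mem_univ _)) ht) hlt rfl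
    refine Set.mem_iUnion.mpr ⟨j₀, Set.mem_iUnion.mpr ⟨s₀, ?_⟩⟩
    rw [Filter.mem_limsup_iff_frequently_mem, Filter.frequently_atTop]
    intro N
    obtain ⟨t, htN, hteq⟩ := hj₀S (max N s₀)
    refine ⟨t, le_trans (le_max_left _ _) htN, ?_, ?_⟩
    · exact Set.mem_iInter₂.mpr fun u hu =>
        Set.mem_iUnion₂.mpr ⟨lvl u, hge u (le_trans (le_max_right _ _) (le_trans htN
          (le_refl t)) |> fun _ => hu.1) , hlvl u⟩
    · rw [← hteq]; exact hlvl t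
  have h0 : μ ({ω | T ω < ⊤}ᶜ) = 0 := measure_mono_null hsub hnull
  refine le_antisymm prob_le_one ?_
  calc (1 : ℝ≥0∞) = μ Set.univ := measure_univ.symm
    _ = μ ({ω | T ω < ⊤} ∪ {ω | T ω < ⊤}ᶜ) := by rw [Set.union_compl_self]
    _ ≤ μ {ω | T ω < ⊤} + μ ({ω | T ω < ⊤}ᶜ) := measure_union_le _ _
    _ = μ {ω | T ω < ⊤} := by rw [h0, add_zero]
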